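/- Let γ⁺ ≥ 1 and γ⁻ ≥ 1 be real numbers and let n > 0. For each ρ > 0 let x(ρ) denote the unique positive solution of x^(γ⁺/γ⁻)·(x − ρ) = n·x. Then the limit as ρ → 0⁺ of (x(ρ)^γ⁺ − n^γ⁻)/ρ exists and equals γ⁻ · n^(γ⁻ − γ⁻/γ⁺). (That is, ∂ρ P(0, n) = γ⁻ · n^(γ⁻ − γ⁻/γ⁺).) -/

import Mathlib

/-- Auxiliary monotonicity lemma: for `g > 0` and `ρ > 0`, the function
`y ↦ y^g - ρ * y^(g-1)` is strictly monotone on `[ρ, ∞)`. -/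
lemma biFluid_aux_mono (g ρ : ℝ) (hg : 0 < g) (hρ : 0 < ρ) :
    StrictMonoOn (fun y : ℝ => y ^ g - ρ * y ^ (g - 1)) (Set.Ici ρ) := by
  apply strictMonoOn_of_deriv_pos (convex_Ici ρ)
  · intro y hy
    have hy0 : 0 < y := lt_of_lt_of_le hρ hy
    exact ((Real.continuousAt_rpow_const y g (Or.inl hy0.ne')).sub
      (continuousAt_const.mul
        (Real.continuousAt_rpow_const y (g - 1) (Or.inl hy0.ne')))).continuousWithinAt
  · intro y hy
    rw [interior_Ici] at hy
    have hy0 : 0 < y := hρ.trans hy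
    have hd : HasDerivAt (fun y : ℝ => y ^ g - ρ * y ^ (g - 1))
        (g * y ^ (g - 1) - ρ * ((g - 1) * y ^ (g - 1 - 1))) y :=
      (Real.hasDerivAt_rpow_const (Or.inl hy0.ne')).sub
        ((Real.hasDerivAt_rpow_const (Or.inl hy0.ne')).const_mul ρ)
    rw [hd.deriv]
    have h1 : y ^ (g - 1) = y ^ (g - 1 - 1) * y := by
      rw [← Real.rpow_add_one hy0.ne' (g - 1 - 1)]
      congr 1; ring
    have h2 : g * y ^ (g - 1) - ρ * ((g - 1) * y ^ (g - 1 - 1))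
        = y ^ (g - 1 - 1) * (g * (y - ρ) + ρ) := by rw [h1]; ring
    rw [h2]
    have h3 : 0 < g * (y - ρ) + ρ := by nlinarith [sub_pos.mpr (Set.mem_Ioi.mp hy)]
    exact mul_pos (Real.rpow_pos_of_pos hy0 _) h3

/-- `∂ρ P(0, n) = γ⁻ · n^(γ⁻ − γ⁻/γ⁺)`: the difference quotient
`(x(ρ)^γ⁺ − n^γ⁻)/ρ` tends to `γ⁻ · n^(γ⁻ − γ⁻/γ⁺)` as `ρ → 0⁺`. -/
theorem biFluid_pressure_deriv_rho_at_zero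
    (gp gm n : ℝ) (hgp : 1 ≤ gp) (hgm : 1 ≤ gm) (hn : 0 < n)
    (x : ℝ → ℝ)
    (hx : ∀ ρ : ℝ, 0 < ρ → 0 < x ρ ∧ x ρ ^ (gp / gm) * (x ρ - ρ) = n * x ρ) :
    Filter.Tendsto (fun ρ => (x ρ ^ gp - n ^ gm) / ρ)
      (nhdsWithin 0 (Set.Ioi 0)) (nhds (gm * n ^ (gm - gm / gp))) := by
  have hgm0 : (0:ℝ) < gm := one_pos.trans_le hgm
  have hgp0 : (0:ℝ) < gp := one_pos.trans_le hgp
  set g : ℝ := gp / gm with hgdef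
  have hg0 : 0 < g := div_pos hgp0 hgm0
  set x0 : ℝ := n ^ (gm / gp) with hx0def
  have hx0pos : 0 < x0 := Real.rpow_pos_of_pos hn _
  have hx0g : x0 ^ g = n := by
    rw [hx0def, ← Real.rpow_mul hn.le]
    rw [show gm / gp * g = 1 by rw [hgdef]; field_simp]
    exact Real.rpow_one n
  -- basic consequences of the defining equation
  have key : ∀ ρ : ℝ, 0 < ρ → ρ < x ρ ∧ x ρ ^ g - ρ * x ρ ^ (g - 1) = n := by
    intro ρ hρ
    obtain ⟨hxp, heq⟩ := hx ρ hρ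
    have hxg : 0 < x ρ ^ g := Real.rpow_pos_of_pos hxp _
    have hnx : 0 < n * x ρ := mul_pos hn hxp
    have hlt : ρ < x ρ := by nlinarith
    refine ⟨hlt, ?_⟩
    have h1 : x ρ ^ (g - 1) = x ρ ^ g / x ρ := by
      rw [Real.rpow_sub hxp, Real.rpow_one]
    rw [h1]
    field_simp
    linear_combination heq
  have hmono : ∀ ρ : ℝ, 0 < ρ →
      StrictMonoOn (fun y : ℝ => y ^ g - ρ * y ^ (g - 1)) (Set.Ici ρ) :=
    fun ρ hρ => biFluid_aux_mono g ρ hg0 hρ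
  -- x ρ → x0
  have hxt : Filter.Tendsto x (nhdsWithin 0 (Set.Ioi 0)) (nhds x0) := by
    rw [tendsto_order]
    constructor
    · intro a ha
      rcases le_or_gt a 0 with h | h
      · filter_upwards [self_mem_nhdsWithin] with ρ hρ
        exact h.trans_lt (hx ρ hρ).1
      · have hag : a ^ g < n := by
          rw [← hx0g]; exact Real.rpow_lt_rpow h.le ha hg0
        filter_upwards [Ioo_mem_nhdsGT_of_mem (Set.left_mem_Ico.mpr h)] with ρ hρ
        obtain ⟨hρ0, hρa⟩ := hρ
        obtain ⟨hlt, hH⟩ := key ρ hρ0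
        rw [← (hmono ρ hρ0).lt_iff_lt (Set.mem_Ici.mpr hρa.le) (Set.mem_Ici.mpr hlt.le)]
        show a ^ g - ρ * a ^ (g - 1) < x ρ ^ g - ρ * x ρ ^ (g - 1)
        rw [hH]
        have h2 : 0 < ρ * a ^ (g - 1) := mul_pos hρ0 (Real.rpow_pos_of_pos h _)
        linarith
    · intro b hb
      have hb0 : 0 < b := hx0pos.trans hb
      have hbg : n < b ^ g := by
        rw [← hx0g]; exact Real.rpow_lt_rpow hx0pos.le hb hg0
      have hbg1 : 0 < b ^ (g - 1) := Real.rpow_pos_of_pos hb0 _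
      have hδ0 : 0 < min ((b ^ g - n) / b ^ (g - 1)) b :=
        lt_min (div_pos (by linarith) hbg1) hb0
      filter_upwards [Ioo_mem_nhdsGT_of_mem (Set.left_mem_Ico.mpr hδ0)] with ρ hρ
      obtain ⟨hρ0, hρδ⟩ := hρ
      obtain ⟨hlt, hH⟩ := key ρ hρ0
      have hρb : ρ < b := hρδ.trans_le (min_le_right _ _)
      have h1 : ρ * b ^ (g - 1) < b ^ g - n := by
        have h2 := hρδ.trans_le (min_le_left _ _)
        rw [lt_div_iff₀ hbg1] at h2
        exact h2
      rw [← (hmono ρ hρ0).lt_iff_lt (Set.mem_Ici.mpr hlt.le) (Set.mem_Ici.mpr hρb.le)]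
      show x ρ ^ g - ρ * x ρ ^ (g - 1) < b ^ g - ρ * b ^ (g - 1)
      rw [hH]
      linarith
  -- x ρ - ρ → x0
  have hxρt : Filter.Tendsto (fun ρ => x ρ - ρ) (nhdsWithin 0 (Set.Ioi 0)) (nhds x0) := by
    have h0 : Filter.Tendsto (fun ρ : ℝ => ρ) (nhdsWithin 0 (Set.Ioi 0)) (nhds 0) :=
      Filter.tendsto_id.mono_left nhdsWithin_le_nhds
    simpa using hxt.sub h0
  -- t ρ := x ρ / (x ρ - ρ) → 1
  have hts : Filter.Tendsto (fun ρ => x ρ / (x ρ - ρ)) (nhdsWithin 0 (Set.Ioi 0)) (nhds 1) := by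
    have := hxt.div hxρt hx0pos.ne'
    rw [div_self hx0pos.ne'] at this; exact this
  have ht1 : ∀ ρ : ℝ, 0 < ρ → 1 < x ρ / (x ρ - ρ) := by
    intro ρ hρ
    have hlt := (key ρ hρ).1
    rw [lt_div_iff₀ (by linarith)]
    linarith
  -- slope of z ↦ z^gm at 1
  have hder : HasDerivAt (fun z : ℝ => z ^ gm) gm 1 := by
    have := Real.hasDerivAt_rpow_const (x := (1:ℝ)) (p := gm) (Or.inl one_ne_zero)
    simpa using this
  have hslope : Filter.Tendsto
      (fun ρ => ((x ρ / (x ρ - ρ)) ^ gm - 1) / (x ρ / (x ρ - ρ) - 1))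
      (nhdsWithin 0 (Set.Ioi 0)) (nhds gm) := by
    have h1 := hasDerivAt_iff_tendsto_slope.mp hder
    have h2 : Filter.Tendsto (fun ρ => x ρ / (x ρ - ρ)) (nhdsWithin 0 (Set.Ioi 0))
        (nhdsWithin 1 {(1:ℝ)}ᶜ) := by
      rw [tendsto_nhdsWithin_iff]
      refine ⟨hts, ?_⟩
      filter_upwards [self_mem_nhdsWithin] with ρ hρ
      exact ne_of_gt (ht1 ρ hρ)
    exact (h1.comp h2).congr fun ρ => by
      simp [slope_def_field, Real.one_rpow]
  -- the product limit
  have hfull : Filter.Tendsto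
      (fun ρ => n ^ gm * (((x ρ / (x ρ - ρ)) ^ gm - 1) / (x ρ / (x ρ - ρ) - 1)) * (x ρ - ρ)⁻¹)
      (nhdsWithin 0 (Set.Ioi 0)) (nhds (n ^ gm * gm * x0⁻¹)) :=
    (tendsto_const_nhds.mul hslope).mul (hxρt.inv₀ hx0pos.ne')
  have hval : n ^ gm * gm * x0⁻¹ = gm * n ^ (gm - gm / gp) := by
    rw [hx0def, ← Real.rpow_neg hn.le, mul_right_comm, ← Real.rpow_add hn,
      show gm + -(gm / gp) = gm - gm / gp by ring]
    ring
  rw [← hval]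
  refine hfull.congr' ?_
  filter_upwards [self_mem_nhdsWithin] with ρ hρ
  obtain ⟨hxp, heq⟩ := hx ρ hρ
  obtain ⟨hlt, -⟩ := key ρ hρ
  have hD : 0 < x ρ - ρ := by linarith
  have ht0 : 0 < x ρ / (x ρ - ρ) := div_pos hxp hD
  have hXg : x ρ ^ gp = (x ρ ^ g) ^ gm := by
    rw [← Real.rpow_mul hxp.le]
    congr 1
    rw [hgdef, div_mul_cancel₀ gp hgm0.ne']
  have hXgval : x ρ ^ g = n * (x ρ / (x ρ - ρ)) := by
    rw [mul_div_assoc']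
    rw [eq_div_iff hD.ne']
    linear_combination heq
  have hpow : x ρ ^ gp = n ^ gm * (x ρ / (x ρ - ρ)) ^ gm := by
    rw [hXg, hXgval, Real.mul_rpow hn.le ht0.le]
  have htm1 : x ρ / (x ρ - ρ) - 1 = ρ / (x ρ - ρ) := by
    field_simp
    ring
  rw [hpow, htm1]
  rw [Set.mem_Ioi] at hρ
  field_simp
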